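/- Let e_max > 3√3/2. Then the regularized cost g(u) = u − u²/2 + (u²/(2·e_max))² has a strict local minimizer u† > 0 on (0,∞); equivalently, the derivative g′(u) = 1 − u + u³/e_max² has two distinct positive roots u₁ < u₂, g is strictly decreasing on (u₁,u₂) and strictly increasing on (u₂,∞), so u₂ is a strict local minimizer of g distinct from 0. Hence the regularization fails to produce a monotone cost exactly when e_max exceeds the threshold 3√3/2. -/

import Mathlib

open Set

/-- For `e_max > 3√3/2`, the regularized cost
`g(u) = u - u²/2 + (u²/(2·e_max))²` (with derivative `g′(u) = 1 - u + u³/e_max²`) has two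
distinct positive critical points `u₁ < u₂`, is strictly decreasing on `[u₁,u₂]` and strictly
increasing on `[u₂,∞)`, and `u₂` is a strict local minimizer of `g` distinct from `0`. -/
theorem regularized_cost_spurious_minimizer (emax : ℝ)
    (h1 : 3 * Real.sqrt 3 / 2 < emax) :
    (∀ u : ℝ, HasDerivAt (fun u : ℝ => u - u^2/2 + (u^2/(2*emax))^2)
      (1 - u + u^3/emax^2) u) ∧
    ∃ u₁ u₂ : ℝ, 0 < u₁ ∧ u₁ < u₂ ∧
      (1 - u₁ + u₁^3/emax^2 = 0) ∧ (1 - u₂ + u₂^3/emax^2 = 0) ∧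
      (∀ u : ℝ, 0 < u → 1 - u + u^3/emax^2 = 0 → u = u₁ ∨ u = u₂) ∧
      StrictAntiOn (fun u : ℝ => u - u^2/2 + (u^2/(2*emax))^2) (Icc u₁ u₂) ∧
      StrictMonoOn (fun u : ℝ => u - u^2/2 + (u^2/(2*emax))^2) (Ici u₂) ∧
      (∀ᶠ u in nhdsWithin u₂ {u₂}ᶜ,
        (fun u : ℝ => u - u^2/2 + (u^2/(2*emax))^2) u₂
          < (fun u : ℝ => u - u^2/2 + (u^2/(2*emax))^2) u) ∧
      u₂ ≠ 0 := by
  have hs0 : (0:ℝ) < Real.sqrt 3 := Real.sqrt_pos.mpr (by norm_num)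
  have hs2 : Real.sqrt 3 ^ 2 = 3 := Real.sq_sqrt (by norm_num)
  have hs1 : (1:ℝ) < Real.sqrt 3 := by nlinarith
  have he0 : (0:ℝ) < emax := lt_trans (by positivity) h1
  have hne : emax ≠ 0 := ne_of_gt he0
  set g : ℝ → ℝ := fun u => u - u^2/2 + (u^2/(2*emax))^2 with hg
  set f : ℝ → ℝ := fun u => 1 - u + u^3/emax^2 with hfdef
  have hder : ∀ u : ℝ, HasDerivAt g (f u) u := by
    intro u
    have h := ((hasDerivAt_id u).sub ((hasDerivAt_pow 2 u).div_const 2)).add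
      (((hasDerivAt_pow 2 u).div_const (2*emax)).pow 2)
    refine h.congr_deriv ?_
    simp only [hfdef]
    field_simp
    linear_combination (u^3*2) * mul_inv_cancel₀ hne
  have hderf : ∀ u : ℝ, HasDerivAt f (3*u^2/emax^2 - 1) u := by
    intro u
    have h := ((hasDerivAt_const u (1:ℝ)).sub (hasDerivAt_id u)).add
      ((hasDerivAt_pow 3 u).div_const (emax^2))
    refine h.congr_deriv ?_
    ring
  set c : ℝ := emax / Real.sqrt 3 with hcdef
  have hc0 : 0 < c := div_pos he0 hs0
  have hce : c < emax := by
    rw [hcdef, div_lt_iff₀ hs0]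
    nlinarith
  have hfc : f c < 0 := by
    show 1 - (emax/Real.sqrt 3) + (emax/Real.sqrt 3)^3/emax^2 < 0
    have h2 : (emax/Real.sqrt 3)^3/emax^2 = emax/(3*Real.sqrt 3) := by
      have hs3 : Real.sqrt 3 ^ 3 = 3 * Real.sqrt 3 := by rw [pow_succ, hs2]
      rw [div_pow, hs3]
      field_simp
    rw [h2]
    have h3 : emax/Real.sqrt 3 = 3*(emax/(3*Real.sqrt 3)) := by field_simp
    rw [h3]
    have h4 : 1/2 < emax/(3*Real.sqrt 3) := by
      rw [lt_div_iff₀ (by positivity)]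
      linarith
    linarith
  have hf0 : f 0 = 1 := by simp [hfdef]
  have hfe : f emax = 1 := by
    show 1 - emax + emax^3/emax^2 = 1
    field_simp
    ring
  have hfcont : Continuous f := by
    simp only [hfdef]; fun_prop
  have hgcont : Continuous g := by
    simp only [hg]; fun_prop
  -- f strictly anti on Icc 0 c
  have hantif : StrictAntiOn f (Icc 0 c) := by
    apply strictAntiOn_of_deriv_neg (convex_Icc 0 c) hfcont.continuousOn
    intro x hx
    rw [interior_Icc] at hx
    rw [(hderf x).deriv]
    have : x^2 < c^2 := by nlinarith [hx.1, hx.2]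
    have hc2 : c^2 = emax^2/3 := by
      rw [hcdef, div_pow, hs2]
    rw [div_sub_one (by positivity), div_neg_iff]
    right
    constructor
    · nlinarith
    · positivity
  -- f strictly mono on Ici c
  have hmonof : StrictMonoOn f (Ici c) := by
    apply strictMonoOn_of_deriv_pos (convex_Ici c) hfcont.continuousOn
    intro x hx
    rw [interior_Ici] at hx
    rw [(hderf x).deriv]
    have hxc : c < x := hx
    have : c^2 < x^2 := by nlinarith
    have hc2 : c^2 = emax^2/3 := by rw [hcdef, div_pow, hs2]
    rw [sub_pos, lt_div_iff₀ (by positivity)]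
    nlinarith
  -- roots via IVT
  have hroot1 : ∃ u₁ ∈ Ioo (0:ℝ) c, f u₁ = 0 := by
    have := intermediate_value_Ioo' (le_of_lt hc0) hfcont.continuousOn
      (a := 0) (b := c)
    have h0 : (0:ℝ) ∈ Ioo (f c) (f 0) := by rw [hf0]; exact ⟨hfc, by norm_num⟩
    obtain ⟨u₁, hu₁, hfu₁⟩ := this h0
    exact ⟨u₁, hu₁, hfu₁⟩
  have hroot2 : ∃ u₂ ∈ Ioo c emax, f u₂ = 0 := by
    have := intermediate_value_Ioo (le_of_lt hce) hfcont.continuousOn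
      (a := c) (b := emax)
    have h0 : (0:ℝ) ∈ Ioo (f c) (f emax) := by rw [hfe]; exact ⟨hfc, by norm_num⟩
    obtain ⟨u₂, hu₂, hfu₂⟩ := this h0
    exact ⟨u₂, hu₂, hfu₂⟩
  obtain ⟨u₁, hu₁, hfu₁⟩ := hroot1
  obtain ⟨u₂, hu₂, hfu₂⟩ := hroot2
  have hu₁c : u₁ ∈ Icc 0 c := ⟨le_of_lt hu₁.1, le_of_lt hu₁.2⟩
  have hu₂c : u₂ ∈ Ici c := le_of_lt hu₂.1
  have h12 : u₁ < u₂ := lt_trans hu₁.2 hu₂.1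
  have hgs : StrictAntiOn g (Icc u₁ u₂) := by
    apply strictAntiOn_of_deriv_neg (convex_Icc u₁ u₂) hgcont.continuousOn
    intro x hx
    rw [interior_Icc] at hx
    rw [(hder x).deriv]
    rcases le_total x c with h | h
    · have : f x < f u₁ := hantif hu₁c ⟨le_of_lt (lt_trans hu₁.1 hx.1), h⟩ hx.1
      rw [hfu₁] at this; exact this
    · have : f x < f u₂ := hmonof h hu₂c hx.2
      rw [hfu₂] at this; exact this
  have hgm : StrictMonoOn g (Ici u₂) := by
    apply strictMonoOn_of_deriv_pos (convex_Ici u₂) hgcont.continuousOn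
    intro x hx
    rw [interior_Ici] at hx
    rw [(hder x).deriv]
    have : f u₂ < f x := hmonof hu₂c (mem_Ici.mpr (le_trans hu₂c (le_of_lt hx))) hx
    rw [hfu₂] at this; exact this
  refine ⟨hder, u₁, u₂, hu₁.1, h12, hfu₁, hfu₂, ?_, hgs, hgm, ?_, ?_⟩
  · -- uniqueness
    intro u hu hfu
    rcases le_total u c with h | h
    · left
      exact hantif.injOn ⟨le_of_lt hu, h⟩ hu₁c (hfu.trans hfu₁.symm)
    · right
      exact hmonof.injOn h hu₂c (hfu.trans hfu₂.symm)
  · -- strict local minimizer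
    have hmem : Ioo u₁ (u₂+1) ∈ nhds u₂ := Ioo_mem_nhds h12 (by linarith)
    filter_upwards [mem_nhdsWithin_of_mem_nhds hmem, self_mem_nhdsWithin] with u hu hne2
    have hneq : u ≠ u₂ := hne2
    rcases lt_or_gt_of_ne hneq with h | h
    · exact hgs ⟨le_of_lt hu.1, le_of_lt h⟩ (right_mem_Icc.mpr (le_of_lt h12)) h
    · exact hgm self_mem_Ici (le_of_lt h) h
  · exact ne_of_gt (lt_trans hc0 hu₂.1)
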